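/- Let T be a quantum channel with full-rank fixed point σ, Ω a positive definite superoperator with Ω(monotonicity): ⟨T(A),Ω(T(A))⟩ ≤ ⟨A,Ω(A)⟩ for all A. Let s₁ be the second largest singular value of Q = Ω^{1/2}∘T∘Ω^{-1/2}. Then for any density matrix ρ and all n ≥ 0: ‖Tⁿ(ρ) - σ‖₁ ≤ s₁ⁿ √(χ²(ρ,σ)), where χ²(ρ,σ) = ⟨ρ-σ, Ω(ρ-σ)⟩, provided ‖X‖₁² ≤ ⟨X,Ω(X)⟩ holds for traceless Hermitian X. -/

import Mathlib

open Matrix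
open scoped ComplexOrder

/-- The trace norm `‖A‖₁ = tr √(A†A)` of a complex matrix. -/
noncomputable def traceNorm {d : ℕ} (A : Matrix (Fin d) (Fin d) ℂ) : ℝ :=
  (((Matrix.posSemidef_conjTranspose_mul_self A).isHermitian.eigenvectorUnitary.1 *
    diagonal (((↑) : ℝ → ℂ) ∘ (Real.sqrt ·) ∘ (Matrix.posSemidef_conjTranspose_mul_self A).isHermitian.eigenvalues) *
    (star (Matrix.posSemidef_conjTranspose_mul_self A).isHermitian.eigenvectorUnitary :
      Matrix (Fin d) (Fin d) ℂ)).trace).re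

/-- Hilbert–Schmidt norm `‖X‖_HS = √tr[X†X]`. -/
noncomputable def hsNorm {d : ℕ} (X : Matrix (Fin d) (Fin d) ℂ) : ℝ :=
  Real.sqrt (((Xᴴ * X).trace).re)

/-- A completely positive trace-preserving map (quantum channel), presented by
a Kraus decomposition `T(X) = ∑ μ, K μ * X * (K μ)ᴴ` with `∑ μ, (K μ)ᴴ * K μ = 1`. -/
def IsCPTP {d : ℕ} (T : Matrix (Fin d) (Fin d) ℂ →ₗ[ℂ] Matrix (Fin d) (Fin d) ℂ) : Prop :=
  ∃ (m : ℕ) (K : Fin m → Matrix (Fin d) (Fin d) ℂ),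
    (∀ X, T X = ∑ μ, K μ * X * (K μ)ᴴ) ∧ (∑ μ, (K μ)ᴴ * K μ = 1)

section Aux
open scoped InnerProductSpace

/-- Embedding of matrices into Euclidean space, matching the Hilbert–Schmidt structure. -/
noncomputable def Emb (d : ℕ) : Matrix (Fin d) (Fin d) ℂ →ₗ[ℂ] EuclideanSpace ℂ (Fin d × Fin d) where
  toFun M := WithLp.toLp 2 (fun p : Fin d × Fin d => M p.1 p.2)
  map_add' A B := by ext p; simp [Matrix.add_apply]
  map_smul' c A := by ext p; simp [Matrix.smul_apply]

lemma inner_Emb {d : ℕ} (A B : Matrix (Fin d) (Fin d) ℂ) :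
    ⟪Emb d A, Emb d B⟫_ℂ = (Aᴴ * B).trace := by
  simp only [PiLp.inner_apply, RCLike.inner_apply, Emb, LinearMap.coe_mk, AddHom.coe_mk,
    PiLp.toLp_apply]
  rw [Matrix.trace]
  simp only [Matrix.diag_apply, Matrix.mul_apply, Matrix.conjTranspose_apply]
  rw [Fintype.sum_prod_type, Finset.sum_comm]
  simp only [starRingEnd_apply]
  exact Finset.sum_congr rfl fun _ _ => Finset.sum_congr rfl fun _ _ => mul_comm _ _

lemma Emb_inj {d : ℕ} {A : Matrix (Fin d) (Fin d) ℂ} (h : Emb d A = 0) : A = 0 := by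
  ext i j
  have := congrArg (fun x => x (i, j)) h
  simpa [Emb] using this

lemma trace_re_nonneg_of_psd {d : ℕ} {M : Matrix (Fin d) (Fin d) ℂ} (h : M.PosSemidef) :
    0 ≤ (M.trace).re := by
  rw [Matrix.trace]
  simp only [Complex.re_sum]
  apply Finset.sum_nonneg
  intro i _
  have := h.re_dotProduct_nonneg (Pi.single i 1)
  simpa [dotProduct, Matrix.mulVec, Pi.single_apply, Finset.sum_ite_eq] using this

lemma aux_pow_contra {c K s : ℝ} (hc : 0 < c) (hK : 0 ≤ K) (hs : 0 ≤ s) (hs1 : s < 1)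
    (h : ∀ k : ℕ, c ≤ K * s ^ k) : False := by
  obtain ⟨k, hk⟩ := exists_pow_lt_of_lt_one (div_pos hc (by linarith : (0:ℝ) < K + 1)) hs1
  have hk' : s ^ k * (K + 1) < c := (lt_div_iff₀ (by linarith)).mp hk
  nlinarith [h k, pow_nonneg hs k]

lemma traceNorm_nonneg' {d : ℕ} (A : Matrix (Fin d) (Fin d) ℂ) : 0 ≤ traceNorm A :=
  trace_re_nonneg_of_psd (by
    have hD : (diagonal (((↑) : ℝ → ℂ) ∘ (Real.sqrt ·) ∘
        (Matrix.posSemidef_conjTranspose_mul_self A).isHermitian.eigenvalues)).PosSemidef :=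
      Matrix.PosSemidef.diagonal (fun i => by
        simp only [Function.comp_apply, Pi.zero_apply, Complex.zero_le_real]; exact Real.sqrt_nonneg _)
    exact hD.mul_mul_conjTranspose_same _)

end Aux

open scoped InnerProductSpace in
/-- Mixing time bound: Let `T` be a quantum channel with full-rank fixed
point `σ`, `Ω` a positive definite superoperator with Hermitian square root `R`
(`R ∘ R = Ω`, inverse `Rinv`) satisfying the monotonicity
`⟨T(A), Ω(T(A))⟩ ≤ ⟨A, Ω(A)⟩` and the trace-norm bound `‖X‖₁² ≤ ⟨X, Ω(X)⟩` for traceless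
Hermitian `X`. Let `s₁` bound the singular values of `Q = R ∘ T ∘ Rinv` on the
orthogonal complement of the top singular vector `R(σ)` (i.e. `s₁` is the second largest
singular value of `Q`). Then for every density matrix `ρ` and all `n`,
`‖Tⁿ(ρ) - σ‖₁ ≤ s₁ⁿ √(χ²(ρ,σ))` with `χ²(ρ,σ) = ⟨ρ-σ, Ω(ρ-σ)⟩`. -/
theorem mixing_time_bound (d : ℕ)
    (T Ω R Rinv : Matrix (Fin d) (Fin d) ℂ →ₗ[ℂ] Matrix (Fin d) (Fin d) ℂ)
    (σ ρ : Matrix (Fin d) (Fin d) ℂ) (s₁ : ℝ)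
    (hT : IsCPTP T) (hσ : σ.PosDef) (hσtr : σ.trace = 1) (hfix : T σ = σ)
    (hρ : ρ.PosSemidef) (hρtr : ρ.trace = 1)
    (hRsq : ∀ X, R (R X) = Ω X)
    (hRsa : ∀ X Y, ((R X)ᴴ * Y).trace = (Xᴴ * R Y).trace)
    (hRinv₁ : ∀ X, R (Rinv X) = X) (hRinv₂ : ∀ X, Rinv (R X) = X)
    (hmono : ∀ A, (((T A)ᴴ * Ω (T A)).trace).re ≤ ((Aᴴ * Ω A).trace).re)
    (htrb : ∀ X : Matrix (Fin d) (Fin d) ℂ, X.IsHermitian → X.trace = 0 →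
      traceNorm X ^ 2 ≤ ((Xᴴ * Ω X).trace).re)
    (hs₁ : 0 ≤ s₁)
    (hsv : ∀ B, ((R σ)ᴴ * B).trace = 0 → hsNorm (R (T (Rinv B))) ≤ s₁ * hsNorm B) :
    ∀ n : ℕ, traceNorm ((T ^ n) (ρ - σ)) ≤
      s₁ ^ n * Real.sqrt ((((ρ - σ)ᴴ * Ω (ρ - σ)).trace).re) := by
  classical
  set X : Matrix (Fin d) (Fin d) ℂ := ρ - σ with hXdef
  set v : EuclideanSpace ℂ (Fin d × Fin d) := Emb d (R σ) with hv
  -- HS norm via the embedding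
  have hnormE : ∀ Z : Matrix (Fin d) (Fin d) ℂ, hsNorm Z = ‖Emb d Z‖ := by
    intro Z
    rw [hsNorm, ← inner_Emb]
    rw [show ((⟪Emb d Z, Emb d Z⟫_ℂ).re) = ‖Emb d Z‖ ^ 2 from inner_self_eq_norm_sq (𝕜 := ℂ) _]
    exact Real.sqrt_sq (norm_nonneg _)
  -- quadratic form via the embedding
  have hq : ∀ A : Matrix (Fin d) (Fin d) ℂ,
      (Aᴴ * Ω A).trace = ⟪Emb d (R A), Emb d (R A)⟫_ℂ := by
    intro A
    rw [inner_Emb, ← hRsq A, ← hRsa A (R A)]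
  have hqre : ∀ A : Matrix (Fin d) (Fin d) ℂ,
      ((Aᴴ * Ω A).trace).re = ‖Emb d (R A)‖ ^ 2 := by
    intro A
    rw [hq A]
    exact inner_self_eq_norm_sq (𝕜 := ℂ) _
  -- Kraus consequences
  obtain ⟨m, K, hK, hK1⟩ := hT
  have hTtr : ∀ A : Matrix (Fin d) (Fin d) ℂ, (T A).trace = A.trace := by
    intro A
    rw [hK A, Matrix.trace_sum]
    have hcyc : ∀ μ : Fin m, (K μ * A * (K μ)ᴴ).trace = ((K μ)ᴴ * K μ * A).trace := by
      intro μ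
      rw [Matrix.trace_mul_cycle]
    rw [Finset.sum_congr rfl (fun μ _ => hcyc μ), ← Matrix.trace_sum]
    rw [show (∑ μ : Fin m, (K μ)ᴴ * K μ * A) = (∑ μ : Fin m, (K μ)ᴴ * K μ) * A from
      (Finset.sum_mul _ _ _).symm, hK1, one_mul]
  have hTherm : ∀ A : Matrix (Fin d) (Fin d) ℂ, (T A)ᴴ = T Aᴴ := by
    intro A
    rw [hK A, hK Aᴴ, Matrix.conjTranspose_sum]
    refine Finset.sum_congr rfl fun μ _ => ?_
    simp [Matrix.conjTranspose_mul, Matrix.mul_assoc]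
  -- iterates
  have hpow : ∀ (k : ℕ) (A : Matrix (Fin d) (Fin d) ℂ), (T ^ (k + 1)) A = T ((T ^ k) A) := by
    intro k A
    rw [pow_succ']
    rfl
  have hTtrn : ∀ (k : ℕ) (A : Matrix (Fin d) (Fin d) ℂ), ((T ^ k) A).trace = A.trace := by
    intro k
    induction k with
    | zero => intro A; rfl
    | succ k ih => intro A; rw [hpow, hTtr, ih]
  have hThermn : ∀ (k : ℕ) (A : Matrix (Fin d) (Fin d) ℂ), ((T ^ k) A)ᴴ = (T ^ k) Aᴴ := by
    intro k
    induction k with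
    | zero => intro A; rfl
    | succ k ih => intro A; rw [hpow, hpow, hTherm, ih]
  -- contraction property
  have hcontr : ∀ A : Matrix (Fin d) (Fin d) ℂ, ‖Emb d (R (T A))‖ ≤ ‖Emb d (R A)‖ := by
    intro A
    have h := hmono A
    rw [hqre, hqre] at h
    nlinarith [norm_nonneg (Emb d (R (T A))), norm_nonneg (Emb d (R A))]
  -- the fixed vector is nonzero
  have hσne : σ ≠ 0 := by
    intro h
    rw [h] at hσtr
    simp at hσtr
  have hvne : v ≠ 0 := by
    intro h
    apply hσne
    have hRσ : R σ = 0 := Emb_inj h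
    have := congrArg Rinv hRσ
    rwa [hRinv₂, map_zero] at this
  -- invariance of the inner product with v under T
  have hinv : ∀ B : Matrix (Fin d) (Fin d) ℂ,
      ⟪v, Emb d (R (T B))⟫_ℂ = ⟪v, Emb d (R B)⟫_ℂ := by
    have hre : ∀ B : Matrix (Fin d) (Fin d) ℂ,
        (⟪v, Emb d (R (T B))⟫_ℂ).re = (⟪v, Emb d (R B)⟫_ℂ).re := by
      intro B
      set u' := Emb d (R (T B)) with hu'def
      set u := Emb d (R B) with hudef
      have hu' : ‖u'‖ ≤ ‖u‖ := hcontr B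
      have hkey : ∀ t : ℝ, 2 * t * (⟪v, u'⟫_ℂ).re + t ^ 2 * ‖u'‖ ^ 2 ≤
          2 * t * (⟪v, u⟫_ℂ).re + t ^ 2 * ‖u‖ ^ 2 := by
        intro t
        have h0 : ‖v + (t : ℂ) • u'‖ ≤ ‖v + (t : ℂ) • u‖ := by
          have h1 := hcontr (σ + (t : ℂ) • B)
          have e1 : Emb d (R (T (σ + (t : ℂ) • B))) = v + (t : ℂ) • u' := by
            rw [map_add, _root_.map_smul, hfix, map_add, _root_.map_smul, map_add, _root_.map_smul, hu'def, hv]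
          have e2 : Emb d (R (σ + (t : ℂ) • B)) = v + (t : ℂ) • u := by
            rw [map_add, _root_.map_smul, map_add, _root_.map_smul, hudef, hv]
          rwa [e1, e2] at h1
        have h2 := pow_le_pow_left₀ (norm_nonneg _) h0 2
        rw [norm_add_sq (𝕜 := ℂ), norm_add_sq (𝕜 := ℂ)] at h2
        simp only [inner_smul_right, norm_smul, Complex.norm_real] at h2
        have hres : ∀ z : ℂ, RCLike.re ((t : ℂ) * z) = t * z.re := fun z =>
          Complex.re_ofReal_mul t z
        rw [hres, hres] at h2
        have habs : (‖t‖ * ‖u'‖) ^ 2 = t ^ 2 * ‖u'‖ ^ 2 := by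
          rw [mul_pow, Real.norm_eq_abs, sq_abs]
        have habs2 : (‖t‖ * ‖u‖) ^ 2 = t ^ 2 * ‖u‖ ^ 2 := by
          rw [mul_pow, Real.norm_eq_abs, sq_abs]
        rw [habs, habs2] at h2
        linarith [h2]
      set a := (⟪v, u'⟫_ℂ).re
      set b := (⟪v, u⟫_ℂ).re
      set C := ‖u‖ ^ 2 - ‖u'‖ ^ 2 with hC
      have key2 : ∀ t : ℝ, 2 * t * (a - b) ≤ t ^ 2 * C := by
        intro t
        have := hkey t
        nlinarith [this]
      have hCnn : 0 ≤ C := by nlinarith [hu', norm_nonneg u', norm_nonneg u]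
      by_contra hab
      have hC1 : 0 < C + 1 := by linarith
      set t := (a - b) / (C + 1) with htdef
      have ht : t * (C + 1) = a - b := div_mul_cancel₀ _ hC1.ne'
      have htne : t ≠ 0 := by
        intro h0
        apply hab
        have := ht
        rw [h0, zero_mul] at this
        exact sub_eq_zero.mp this.symm ▸ (by linarith [this])
      have ht2 : 0 < t ^ 2 := pow_two_pos_of_ne_zero htne
      have h3 : 2 * t * (t * (C + 1)) ≤ t ^ 2 * C := by
        rw [ht]; exact key2 t
      nlinarith [h3, ht2, hCnn]
    intro B
    have h1 := hre B
    have h2 := hre (Complex.I • B)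
    simp only [_root_.map_smul, inner_smul_right] at h2
    simp only [Complex.mul_re, Complex.I_re, Complex.I_im, zero_mul, one_mul, zero_sub,
      neg_neg] at h2
    apply Complex.ext h1
    linarith [h2]
  have hinvn : ∀ (k : ℕ) (B : Matrix (Fin d) (Fin d) ℂ),
      ⟪v, Emb d (R ((T ^ k) B))⟫_ℂ = ⟪v, Emb d (R B)⟫_ℂ := by
    intro k
    induction k with
    | zero => intro B; rfl
    | succ k ih => intro B; rw [hpow, hinv, ih]
  -- decay on the orthogonal complement
  have hdecay : ∀ Y : Matrix (Fin d) (Fin d) ℂ, ⟪v, Emb d (R Y)⟫_ℂ = 0 →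
      ∀ k : ℕ, ‖Emb d (R ((T ^ k) Y))‖ ≤ s₁ ^ k * ‖Emb d (R Y)‖ := by
    intro Y hY k
    induction k with
    | zero => simp
    | succ k ih =>
      have horth : ((R σ)ᴴ * (R ((T ^ k) Y))).trace = 0 := by
        rw [← inner_Emb, ← hv, hinvn k Y, hY]
      have hs := hsv _ horth
      rw [hRinv₂, hnormE, hnormE] at hs
      rw [hpow]
      calc ‖Emb d (R (T ((T ^ k) Y)))‖ ≤ s₁ * ‖Emb d (R ((T ^ k) Y))‖ := hs
        _ ≤ s₁ * (s₁ ^ k * ‖Emb d (R Y)‖) := by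
            apply mul_le_mul_of_nonneg_left ih hs₁
        _ = s₁ ^ (k + 1) * ‖Emb d (R Y)‖ := by ring
  -- properties of X = ρ - σ
  have hXherm : X.IsHermitian := hρ.isHermitian.sub hσ.isHermitian
  have hXtr : X.trace = 0 := by
    rw [hXdef, Matrix.trace_sub, hρtr, hσtr, sub_self]
  have hXnherm : ∀ k : ℕ, ((T ^ k) X).IsHermitian := by
    intro k
    unfold Matrix.IsHermitian
    rw [hThermn, hXherm.eq]
  have hXntr : ∀ k : ℕ, ((T ^ k) X).trace = 0 := fun k => (hTtrn k X).trans hXtr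
  -- trace norm bound
  have htn : ∀ k : ℕ, traceNorm ((T ^ k) X) ≤ ‖Emb d (R ((T ^ k) X))‖ := by
    intro k
    have h := htrb _ (hXnherm k) (hXntr k)
    rw [hqre] at h
    nlinarith [traceNorm_nonneg' ((T ^ k) X), norm_nonneg (Emb d (R ((T ^ k) X)))]
  -- RHS rewriting
  have hrhs : Real.sqrt (((Xᴴ * Ω X).trace).re) = ‖Emb d (R X)‖ := by
    rw [hqre, Real.sqrt_sq (norm_nonneg _)]
  intro n
  rw [hrhs]
  rcases le_or_gt 1 s₁ with h1 | h1
  · -- easy case: s₁ ≥ 1, use monotonicity only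
    have hit : ∀ k : ℕ, ‖Emb d (R ((T ^ k) X))‖ ≤ ‖Emb d (R X)‖ := by
      intro k
      induction k with
      | zero => exact le_refl _
      | succ k ih =>
        rw [hpow]
        exact le_trans (hcontr _) ih
    calc traceNorm ((T ^ n) X) ≤ ‖Emb d (R ((T ^ n) X))‖ := htn n
      _ ≤ ‖Emb d (R X)‖ := hit n
      _ ≤ s₁ ^ n * ‖Emb d (R X)‖ :=
          le_mul_of_one_le_left (norm_nonneg _) (one_le_pow₀ h1)
  · -- hard case: s₁ < 1; first show orthogonality ⟪v, Emb (R X)⟫ = 0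
    have hw : ⟪v, Emb d (R X)⟫_ℂ = 0 := by
      by_contra hwne
      set w := ⟪v, Emb d (R X)⟫_ℂ with hwdef
      have hnv : (0:ℝ) < ‖v‖ ^ 2 := pow_pos (norm_pos_iff.mpr hvne) 2
      set c : ℂ := w / ((‖v‖ ^ 2 : ℝ) : ℂ) with hcdef
      have hcne : c ≠ 0 := div_ne_zero hwne (by exact_mod_cast hnv.ne')
      set Y : Matrix (Fin d) (Fin d) ℂ := X - c • σ with hYdef
      have hne : ((‖v‖ ^ 2 : ℝ) : ℂ) ≠ 0 := by exact_mod_cast hnv.ne'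
      have hvv : ⟪v, v⟫_ℂ = ((‖v‖ ^ 2 : ℝ) : ℂ) := by
        apply Complex.ext
        · rw [Complex.ofReal_re]; exact inner_self_eq_norm_sq (𝕜 := ℂ) v
        · rw [Complex.ofReal_im]; exact inner_self_im (𝕜 := ℂ) v
      have hoY : ⟪v, Emb d (R Y)⟫_ℂ = 0 := by
        rw [hYdef, map_sub, _root_.map_smul, map_sub, _root_.map_smul, inner_sub_right,
          inner_smul_right, ← hv, hvv, ← hwdef, hcdef, div_mul_cancel₀ _ hne, sub_self]
      have hd := hdecay Y hoY
      have htrY : ∀ k : ℕ, ((T ^ k) Y).trace = -c := by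
        intro k
        rw [hTtrn, hYdef, Matrix.trace_sub, hXtr, Matrix.trace_smul, hσtr]
        simp
      have htrip : ∀ Z : Matrix (Fin d) (Fin d) ℂ,
          Z.trace = ⟪Emb d (Rinv 1), Emb d (R Z)⟫_ℂ := by
        intro Z
        rw [inner_Emb, ← hRsa (Rinv 1) Z, hRinv₁, Matrix.conjTranspose_one, one_mul]
      have habs : ∀ k : ℕ, ‖c‖ ≤ ‖Emb d (Rinv 1)‖ * (s₁ ^ k * ‖Emb d (R Y)‖) := by
        intro k
        have e1 : ‖c‖ = ‖((T ^ k) Y).trace‖ := by rw [htrY k, norm_neg]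
        rw [e1, htrip ((T ^ k) Y)]
        calc ‖⟪Emb d (Rinv 1), Emb d (R ((T ^ k) Y))⟫_ℂ‖
            ≤ ‖Emb d (Rinv 1)‖ * ‖Emb d (R ((T ^ k) Y))‖ := norm_inner_le_norm _ _
          _ ≤ ‖Emb d (Rinv 1)‖ * (s₁ ^ k * ‖Emb d (R Y)‖) :=
              mul_le_mul_of_nonneg_left (hd k) (norm_nonneg _)
      have hcpos : 0 < ‖c‖ := norm_pos_iff.mpr hcne
      refine aux_pow_contra hcpos
        (mul_nonneg (norm_nonneg (Emb d (Rinv 1))) (norm_nonneg (Emb d (R Y)))) hs₁ h1 ?_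
      intro k
      calc ‖c‖ ≤ ‖Emb d (Rinv 1)‖ * (s₁ ^ k * ‖Emb d (R Y)‖) := habs k
        _ = ‖Emb d (Rinv 1)‖ * ‖Emb d (R Y)‖ * s₁ ^ k := by ring
    have hd := hdecay X hw n
    calc traceNorm ((T ^ n) X) ≤ ‖Emb d (R ((T ^ n) X))‖ := htn n
      _ ≤ s₁ ^ n * ‖Emb d (R X)‖ := hd
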